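/- Let A be a d×d complex matrix whose numerical range W(A) has nonempty interior in ℂ. Then the normalized trace tr(A)/d lies in the interior of W(A). -/

import Mathlib

open Matrix

/-- The numerical range of a `d × d` complex matrix `A`. -/
def numericalRange {d : ℕ} (A : Matrix (Fin d) (Fin d) ℂ) : Set ℂ :=
  {z | ∃ x : Fin d → ℂ, star x ⬝ᵥ x = 1 ∧ star x ⬝ᵥ A.mulVec x = z}

section NRAux

open Complex

variable {d : ℕ}

lemma conj_dot (M : Matrix (Fin d) (Fin d) ℂ) (x y : Fin d → ℂ) :
    starRingEnd ℂ (star y ⬝ᵥ M.mulVec x) = star x ⬝ᵥ Mᴴ.mulVec y := by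
  simp only [dotProduct, mulVec, conjTranspose_apply, Pi.star_apply, map_sum, _root_.map_mul,
    Finset.mul_sum]
  rw [Finset.sum_comm]
  simp [mul_comm, mul_left_comm, RCLike.star_def, starRingEnd_self_apply]

lemma dot_expand (M : Matrix (Fin d) (Fin d) ℂ) (a b : ℂ) (x y : Fin d → ℂ) :
    star (a • x + b • y) ⬝ᵥ M.mulVec (a • x + b • y)
      = starRingEnd ℂ a * a * (star x ⬝ᵥ M.mulVec x)
        + starRingEnd ℂ a * b * (star x ⬝ᵥ M.mulVec y)
        + starRingEnd ℂ b * a * (star y ⬝ᵥ M.mulVec x)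
        + starRingEnd ℂ b * b * (star y ⬝ᵥ M.mulVec y) := by
  simp only [star_add, star_smul, mulVec_add, mulVec_smul, dotProduct_add, add_dotProduct,
    smul_dotProduct, dotProduct_smul, smul_eq_mul, star_trivial, RCLike.star_def]
  ring

lemma norm_expand (a b : ℂ) (x y : Fin d → ℂ) :
    star (a • x + b • y) ⬝ᵥ (a • x + b • y)
      = starRingEnd ℂ a * a * (star x ⬝ᵥ x)
        + starRingEnd ℂ a * b * (star x ⬝ᵥ y)
        + starRingEnd ℂ b * a * (star y ⬝ᵥ x)
        + starRingEnd ℂ b * b * (star y ⬝ᵥ y) := by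
  simp only [star_add, star_smul, dotProduct_add, add_dotProduct,
    smul_dotProduct, dotProduct_smul, smul_eq_mul, RCLike.star_def]
  ring

lemma smul_dot_self (c : ℂ) (x : Fin d → ℂ) :
    star (c • x) ⬝ᵥ (c • x) = starRingEnd ℂ c * c * (star x ⬝ᵥ x) := by
  simp only [star_smul, smul_dotProduct, dotProduct_smul, smul_eq_mul, RCLike.star_def]
  ring

lemma smul_dot_mulVec (M : Matrix (Fin d) (Fin d) ℂ) (c : ℂ) (x : Fin d → ℂ) :
    star (c • x) ⬝ᵥ M.mulVec (c • x) = starRingEnd ℂ c * c * (star x ⬝ᵥ M.mulVec x) := by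
  simp only [star_smul, mulVec_smul, smul_dotProduct, dotProduct_smul, smul_eq_mul,
    RCLike.star_def]
  ring

lemma dot_self_real (x : Fin d → ℂ) : ∃ r : ℝ, 0 ≤ r ∧ (star x ⬝ᵥ x) = (r : ℂ) ∧ (r = 0 → x = 0) := by
  refine ⟨∑ i, Complex.normSq (x i), Finset.sum_nonneg fun i _ => normSq_nonneg _, ?_, ?_⟩
  · simp [dotProduct, Complex.normSq_eq_conj_mul_self, RCLike.star_def]
  · intro h
    funext i
    have := (Finset.sum_eq_zero_iff_of_nonneg (fun i _ => normSq_nonneg (x i))).mp h i (Finset.mem_univ i)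
    simpa using normSq_eq_zero.mp this

lemma key (B : Matrix (Fin d) (Fin d) ℂ) (x y : Fin d → ℂ)
    (hx : star x ⬝ᵥ x = 1) (hy : star y ⬝ᵥ y = 1)
    (hqx : star x ⬝ᵥ B.mulVec x = 0) (hqy : star y ⬝ᵥ B.mulVec y = 1)
    {t : ℝ} (ht : t ∈ Set.Icc (0:ℝ) 1) :
    ∃ v : Fin d → ℂ, star v ⬝ᵥ v = 1 ∧ star v ⬝ᵥ B.mulVec v = (t : ℂ) := by
  classical
  set p := star x ⬝ᵥ B.mulVec y with hp
  set r := star y ⬝ᵥ B.mulVec x with hr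
  set u := p - starRingEnd ℂ r with hu
  set γ : ℂ := if u = 0 then 1 else (‖u‖ : ℂ)⁻¹ * u with hγdef
  have hγ : starRingEnd ℂ γ * γ = 1 := by
    by_cases h0 : u = 0
    · simp [hγdef, h0]
    · have habs : (‖u‖ : ℝ) ≠ 0 := norm_ne_zero_iff.mpr h0
      rw [hγdef, if_neg h0, _root_.map_mul, map_inv₀, Complex.conj_ofReal]
      have h1 : starRingEnd ℂ u * u = ((‖u‖ ^ 2 : ℝ) : ℂ) := by
        rw [mul_comm, Complex.mul_conj]
        norm_cast
        rw [Complex.normSq_eq_norm_sq]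
      calc (‖u‖:ℂ)⁻¹ * starRingEnd ℂ u * ((‖u‖:ℂ)⁻¹ * u)
          = (starRingEnd ℂ u * u) / ((‖u‖:ℂ) * (‖u‖:ℂ)) := by
            field_simp
        _ = 1 := by
            have hne : (‖u‖ : ℂ) ≠ 0 := by exact_mod_cast habs
            rw [h1, show ((‖u‖ ^ 2 : ℝ) : ℂ) = (‖u‖:ℂ) * (‖u‖:ℂ) by push_cast; ring,
              div_self (mul_ne_zero hne hne)]
  have habs2 : ∀ h0 : ¬ u = 0, (starRingEnd ℂ) u * u = ((‖u‖ ^ 2 : ℝ) : ℂ) := by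
    intro h0
    rw [mul_comm, Complex.mul_conj]
    norm_cast
    rw [Complex.normSq_eq_norm_sq]
  have hγu : ((starRingEnd ℂ γ) * u).im = 0 := by
    by_cases h0 : u = 0
    · simp [h0]
    · rw [hγdef, if_neg h0, _root_.map_mul, map_inv₀, Complex.conj_ofReal, mul_assoc,
        habs2 h0, ← Complex.ofReal_inv, ← Complex.ofReal_mul, Complex.ofReal_im]
  have him : ((starRingEnd ℂ γ) * p + γ * r).im = 0 := by
    have e1 : γ * r = starRingEnd ℂ (starRingEnd ℂ γ * starRingEnd ℂ r) := by
      simp [_root_.map_mul]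
    have e2 : ((starRingEnd ℂ γ) * p).im - ((starRingEnd ℂ γ) * (starRingEnd ℂ r)).im
        = ((starRingEnd ℂ γ) * u).im := by
      rw [hu, mul_sub, Complex.sub_im]
    rw [e1, Complex.add_im, Complex.conj_im]
    rw [hγu] at e2
    linarith
  set gre : ℝ := ((starRingEnd ℂ γ) * p + γ * r).re with hgre
  have hg : (starRingEnd ℂ γ) * p + γ * r = (gre : ℂ) := by
    apply Complex.ext <;> simp [hgre, him]
  set x' : Fin d → ℂ := γ • x with hx'def
  have hx' : star x' ⬝ᵥ x' = 1 := by rw [hx'def, smul_dot_self, hx, mul_one, hγ]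
  have hqx' : star x' ⬝ᵥ B.mulVec x' = 0 := by rw [hx'def, smul_dot_mulVec, hqx, mul_zero]
  have hpx' : star x' ⬝ᵥ B.mulVec y = (starRingEnd ℂ γ) * p := by
    rw [hx'def, hp]
    simp only [star_smul, smul_dotProduct, smul_eq_mul, RCLike.star_def]
  have hrx' : star y ⬝ᵥ B.mulVec x' = γ * r := by
    rw [hx'def, hr, mulVec_smul]
    simp only [dotProduct_smul, smul_eq_mul]
  obtain ⟨mre, hm⟩ : ∃ mre : ℝ, star x' ⬝ᵥ y + star y ⬝ᵥ x' = (mre : ℂ) := by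
    refine ⟨(star x' ⬝ᵥ y + star y ⬝ᵥ x').re, ?_⟩
    have e1 : star y ⬝ᵥ x' = starRingEnd ℂ (star x' ⬝ᵥ y) := by
      rw [star_dotProduct]; rfl
    apply Complex.ext
    · simp
    · simp [e1]
  set vs : ℝ → (Fin d → ℂ) := fun s => ((1 - s : ℝ) : ℂ) • x' + ((s : ℝ) : ℂ) • y with hvs
  have hQ : ∀ s : ℝ, star (vs s) ⬝ᵥ B.mulVec (vs s) = ((s^2 + s*(1-s)*gre : ℝ) : ℂ) := by
    intro s
    rw [hvs]
    rw [dot_expand, hqx', hqy, hpx', hrx', Complex.conj_ofReal, Complex.conj_ofReal]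
    push_cast
    linear_combination ((s : ℂ) * (1 - (s:ℂ))) * hg
  set n : ℝ → ℝ := fun s => (1-s)^2 + s^2 + s*(1-s)*mre with hn
  have hN : ∀ s : ℝ, star (vs s) ⬝ᵥ (vs s) = ((n s : ℝ) : ℂ) := by
    intro s
    rw [hvs, hn]
    rw [norm_expand, hx', hy, Complex.conj_ofReal, Complex.conj_ofReal]
    push_cast
    linear_combination ((s : ℂ) * (1 - (s:ℂ))) * hm
  have hpos : ∀ s ∈ Set.Icc (0:ℝ) 1, 0 < n s := by
    intro s _
    obtain ⟨ρ, hρ0, hρeq, hρz⟩ := dot_self_real (vs s)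
    have hns : n s = ρ := by
      have := (hN s).symm.trans hρeq
      exact_mod_cast this
    rcases lt_or_eq_of_le hρ0 with hlt | heq
    · rw [hns]; exact hlt
    · exfalso
      have hvz : vs s = 0 := hρz heq.symm
      by_cases hs0 : s = 0
      · have : x' = 0 := by
          have := hvz
          rw [hvs] at this
          simpa [hs0] using this
        rw [this] at hx'
        simpa using hx'
      · have hsC : (s : ℂ) ≠ 0 := by exact_mod_cast hs0
        have hyx : y = (((s:ℂ))⁻¹ * (-((1 - s : ℝ) : ℂ))) • x' := by
          have h1 : ((1 - s : ℝ) : ℂ) • x' + (s:ℂ) • y = 0 := by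
            rw [hvs] at hvz; exact hvz
          have h2 : (s:ℂ) • y = (-((1 - s : ℝ) : ℂ)) • x' := by
            rw [neg_smul, eq_neg_iff_add_eq_zero, add_comm]; exact h1
          calc y = ((s:ℂ)⁻¹ * (s:ℂ)) • y := by rw [inv_mul_cancel₀ hsC, one_smul]
            _ = (s:ℂ)⁻¹ • ((s:ℂ) • y) := by rw [mul_smul]
            _ = (s:ℂ)⁻¹ • ((-((1 - s : ℝ) : ℂ)) • x') := by rw [h2]
            _ = (((s:ℂ))⁻¹ * (-((1 - s : ℝ) : ℂ))) • x' := by rw [mul_smul]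
        rw [hyx, smul_dot_mulVec, hqx', mul_zero] at hqy
        exact one_ne_zero hqy.symm
  set F : ℝ → ℝ := fun s => (s^2 + s*(1-s)*gre) / n s with hF
  have hFcont : ContinuousOn F (Set.Icc 0 1) := by
    apply ContinuousOn.div
    · fun_prop
    · fun_prop
    · intro s hs; exact (hpos s hs).ne'
  have hF0 : F 0 = 0 := by simp [hF, hn]
  have hF1 : F 1 = 1 := by norm_num [hF, hn]
  have hivt := intermediate_value_Icc (by norm_num : (0:ℝ) ≤ 1) hFcont
  rw [hF0, hF1] at hivt
  obtain ⟨s₀, hs₀, hFs₀⟩ := hivt ht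
  have hn0 : 0 < n s₀ := hpos s₀ hs₀
  set c : ℝ := (Real.sqrt (n s₀))⁻¹ with hc
  have hsq : c * c * n s₀ = 1 := by
    rw [hc]
    have h1 : Real.sqrt (n s₀) * Real.sqrt (n s₀) = n s₀ := Real.mul_self_sqrt hn0.le
    have h2 : Real.sqrt (n s₀) ≠ 0 := by positivity
    field_simp
    rw [Real.sq_sqrt hn0.le]
  refine ⟨((c:ℝ):ℂ) • vs s₀, ?_, ?_⟩
  · rw [smul_dot_self, Complex.conj_ofReal, hN s₀]
    push_cast
    exact_mod_cast congrArg (fun r : ℝ => (r : ℂ)) hsq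
  · rw [smul_dot_mulVec, Complex.conj_ofReal, hQ s₀]
    have hne : n s₀ ≠ 0 := hn0.ne'
    have hcc : c * c = (n s₀)⁻¹ := by
      field_simp
      linear_combination hsq
    have hval : c * c * (s₀^2 + s₀*(1-s₀)*gre) = t := by
      rw [hcc, mul_comm, ← div_eq_mul_inv, ← hFs₀, hF]
    calc ((c:ℝ):ℂ) * ((c:ℝ):ℂ) * ((s₀^2 + s₀*(1-s₀)*gre : ℝ) : ℂ)
        = ((c * c * (s₀^2 + s₀*(1-s₀)*gre) : ℝ) : ℂ) := by push_cast; ring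
      _ = (t : ℂ) := by rw [hval]

lemma single_dot_mulVec (M : Matrix (Fin d) (Fin d) ℂ) (i j : Fin d) :
    star (Pi.single i (1:ℂ)) ⬝ᵥ M.mulVec (Pi.single j 1) = M i j := by
  simp [dotProduct, mulVec, Pi.single_apply, Finset.mul_sum]

lemma single_dot_self (i : Fin d) :
    star (Pi.single i (1:ℂ)) ⬝ᵥ (Pi.single i (1:ℂ)) = 1 := by
  simp [dotProduct, Pi.single_apply]

lemma single_dot_other (i j : Fin d) (hij : i ≠ j) :
    star (Pi.single i (1:ℂ)) ⬝ᵥ (Pi.single j (1:ℂ)) = 0 := by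
  simp [dotProduct, Pi.single_apply, hij, Ne.symm hij]


lemma nr_convex (A : Matrix (Fin d) (Fin d) ℂ) : Convex ℝ (numericalRange A) := by
  intro z1 hz1 z2 hz2 a b ha hb hab
  obtain ⟨x, hx, hqx⟩ := hz1
  obtain ⟨y, hy, hqy⟩ := hz2
  by_cases hzz : z1 = z2
  · refine ⟨x, hx, ?_⟩
    rw [hqx, hzz, ← add_smul, hab, one_smul]
  · have hne : z2 - z1 ≠ 0 := sub_ne_zero.mpr (Ne.symm hzz)
    set B : Matrix (Fin d) (Fin d) ℂ := (z2 - z1)⁻¹ • (A - z1 • (1 : Matrix (Fin d) (Fin d) ℂ))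
      with hB
    have hBval : ∀ v : Fin d → ℂ, star v ⬝ᵥ B.mulVec v
        = (z2 - z1)⁻¹ * (star v ⬝ᵥ A.mulVec v - z1 * (star v ⬝ᵥ v)) := by
      intro v
      rw [hB]
      rw [smul_mulVec, sub_mulVec, smul_mulVec, one_mulVec]
      simp only [dotProduct_smul, dotProduct_sub, smul_eq_mul]
    have hqxB : star x ⬝ᵥ B.mulVec x = 0 := by
      rw [hBval, hqx, hx, mul_one, sub_self, mul_zero]
    have hqyB : star y ⬝ᵥ B.mulVec y = 1 := by
      rw [hBval, hqy, hy, mul_one, inv_mul_cancel₀ hne]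
    have hbt : b ∈ Set.Icc (0:ℝ) 1 := ⟨hb, by linarith⟩
    obtain ⟨v, hv1, hvq⟩ := key B x y hx hy hqxB hqyB hbt
    refine ⟨v, hv1, ?_⟩
    rw [hBval, hv1, mul_one] at hvq
    have h3 : star v ⬝ᵥ A.mulVec v - z1 = (b:ℂ) * (z2 - z1) := by
      field_simp at hvq
      linear_combination hvq
    have habC : (a:ℂ) + (b:ℂ) = 1 := by exact_mod_cast hab
    rw [Complex.real_smul, Complex.real_smul]
    linear_combination h3 - z1 * habC

end NRAux

/-- If `W(A)` has nonempty interior, then the normalized trace `tr(A)/d` lies in the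
interior of `W(A)`. -/
theorem normalized_trace_mem_interior_numericalRange {d : ℕ}
    (A : Matrix (Fin d) (Fin d) ℂ)
    (h : (interior (numericalRange A)).Nonempty) :
    A.trace / (d : ℂ) ∈ interior (numericalRange A) := by
  classical
  obtain ⟨z₀, hz₀⟩ := h
  have hd : 0 < d := by
    rcases Nat.eq_zero_or_pos d with h0 | h0
    · exfalso
      obtain ⟨x, hx1, -⟩ := interior_subset hz₀
      subst h0
      simp [dotProduct] at hx1
    · exact h0
  have hdC : (d : ℂ) ≠ 0 := by exact_mod_cast hd.ne'
  by_contra hc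
  set W := numericalRange A with hW
  set cc : ℂ := A.trace / (d : ℂ) with hcc
  have hconv : Convex ℝ W := nr_convex A
  obtain ⟨f, hf⟩ := geometric_hahn_banach_open_point hconv.interior isOpen_interior hc
  have hfW : ∀ z ∈ W, f z ≤ f cc := by
    intro z hz
    have hseg : ∀ t : ℝ, t ∈ Set.Ioc (0:ℝ) 1 → f (z + t • (z₀ - z)) < f cc := fun t htt =>
      hf _ (hconv.add_smul_sub_mem_interior hz hz₀ htt)
    have hlim : Filter.Tendsto (fun t : ℝ => f (z + t • (z₀ - z)))
        (nhdsWithin 0 (Set.Ioi 0)) (nhds (f z)) := by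
      have hcont : Continuous fun t : ℝ => f (z + t • (z₀ - z)) := by fun_prop
      have h1 := hcont.tendsto 0
      simp only [zero_smul, add_zero] at h1
      exact h1.mono_left nhdsWithin_le_nhds
    refine le_of_tendsto hlim ?_
    filter_upwards [Ioc_mem_nhdsGT_of_mem (Set.left_mem_Ico.mpr one_pos)] with t htt
      using (hseg t htt).le
  set w : ℂ := ⟨f 1, f Complex.I⟩ with hwdef
  have hfw : ∀ z : ℂ, f z = (starRingEnd ℂ w * z).re := by
    intro z
    have hz : z = z.re • (1:ℂ) + z.im • Complex.I := by
      rw [Complex.real_smul, Complex.real_smul, mul_one, Complex.re_add_im]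
    conv_lhs => rw [hz]
    rw [map_add, f.map_smul, f.map_smul]
    simp [hwdef, Complex.mul_re, Complex.conj_re, Complex.conj_im, smul_eq_mul]
    ring
  set μ : ℝ := f cc with hμ
  set ν : ℝ := 2 * μ with hν
  set M : Matrix (Fin d) (Fin d) ℂ := (starRingEnd ℂ w) • A + w • Aᴴ with hM
  have hherm : Mᴴ = M := by
    rw [hM, conjTranspose_add, conjTranspose_smul, conjTranspose_smul,
      conjTranspose_conjTranspose]
    simp [add_comm, RCLike.star_def]
  have hqM : ∀ x : Fin d → ℂ, star x ⬝ᵥ M.mulVec x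
      = starRingEnd ℂ w * (star x ⬝ᵥ A.mulVec x)
        + w * starRingEnd ℂ (star x ⬝ᵥ A.mulVec x) := by
    intro x
    rw [hM, add_mulVec, smul_mulVec, smul_mulVec, dotProduct_add,
      dotProduct_smul, dotProduct_smul, smul_eq_mul, smul_eq_mul, conj_dot]
  have hMle : ∀ x : Fin d → ℂ, star x ⬝ᵥ x = 1 → (star x ⬝ᵥ M.mulVec x).re ≤ ν := by
    intro x hx1
    have hmem : star x ⬝ᵥ A.mulVec x ∈ W := ⟨x, hx1, rfl⟩
    have hle : f (star x ⬝ᵥ A.mulVec x) ≤ μ := hfW _ hmem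
    rw [hqM]
    have h2 : (starRingEnd ℂ w * (star x ⬝ᵥ A.mulVec x)
        + w * starRingEnd ℂ (star x ⬝ᵥ A.mulVec x)).re
        = 2 * (starRingEnd ℂ w * (star x ⬝ᵥ A.mulVec x)).re := by
      simp [Complex.add_re, Complex.mul_re, Complex.conj_re, Complex.conj_im]
      ring
    rw [h2, hν, ← hfw]
    linarith
  have htrM : (M.trace).re = d * ν := by
    have h1 : M.trace = starRingEnd ℂ w * A.trace + w * starRingEnd ℂ A.trace := by
      rw [hM, trace_add, trace_smul, trace_smul, trace_conjTranspose]
      simp [smul_eq_mul, RCLike.star_def]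
    have h2 : f A.trace = d * μ := by
      have h3 : A.trace = (d : ℝ) • cc := by
        rw [Complex.real_smul, hcc]
        field_simp
        norm_cast
      rw [h3, f.map_smul, smul_eq_mul, hμ]
    have h4 : (starRingEnd ℂ w * A.trace + w * starRingEnd ℂ A.trace).re
        = 2 * (starRingEnd ℂ w * A.trace).re := by
      simp [Complex.add_re, Complex.mul_re, Complex.conj_re, Complex.conj_im]
      ring
    rw [h1, h4, ← hfw, h2, hν]
    ring
  have hdiagre : ∀ i : Fin d, (M i i).re = ν := by
    have hle : ∀ i : Fin d, (M i i).re ≤ ν := by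
      intro i
      have := hMle (Pi.single i 1) (single_dot_self i)
      rwa [single_dot_mulVec] at this
    have hsum : ∑ i : Fin d, (M i i).re = d * ν := by
      have h5 : M.trace = ∑ i : Fin d, M i i := rfl
      rw [← htrM, h5, Complex.re_sum]
    by_contra hcon
    push_neg at hcon
    obtain ⟨i0, hi0⟩ := hcon
    have hlt : (M i0 i0).re < ν := lt_of_le_of_ne (hle i0) hi0
    have h6 : ∑ i : Fin d, (M i i).re < ∑ _i : Fin d, ν :=
      Finset.sum_lt_sum (fun i _ => hle i) ⟨i0, Finset.mem_univ i0, hlt⟩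
    rw [Finset.sum_const, Finset.card_univ, Fintype.card_fin, nsmul_eq_mul, hsum] at h6
    exact lt_irrefl _ h6
  have hdiag : ∀ i : Fin d, M i i = (ν : ℂ) := by
    intro i
    have him : (M i i).im = 0 := by
      have h7 := congrFun (congrFun hherm i) i
      rw [conjTranspose_apply] at h7
      have h8 := congrArg Complex.im h7
      rw [show star (M i i) = starRingEnd ℂ (M i i) from rfl, Complex.conj_im] at h8
      linarith
    apply Complex.ext
    · simpa using hdiagre i
    · simpa using him
  have hoff : ∀ i j : Fin d, i ≠ j → M i j = 0 := by
    intro i j hij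
    have hsym : M j i = starRingEnd ℂ (M i j) := by
      conv_lhs => rw [← hherm]
      simp [conjTranspose_apply, RCLike.star_def]
    have hkey : ∀ t : ℂ, starRingEnd ℂ t * t = 1 → (t * M i j).re ≤ 0 := by
      intro t htt
      set rr : ℝ := (Real.sqrt 2)⁻¹ with hrrdef
      set c : ℂ := (rr : ℂ) with hcdef
      have hcconj : starRingEnd ℂ c = c := Complex.conj_ofReal _
      have hs2 : Real.sqrt 2 * Real.sqrt 2 = 2 := Real.mul_self_sqrt (by norm_num)
      have hs2ne : Real.sqrt 2 ≠ 0 := by positivity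
      have hcoefR : rr * rr * 2 = 1 := by
        rw [hrrdef]
        field_simp
        rw [Real.sq_sqrt (by norm_num)]
      have hcoef : c * c * 2 = 1 := by
        rw [hcdef]
        exact_mod_cast congrArg (fun r : ℝ => (r : ℂ)) hcoefR
      set x : Fin d → ℂ := c • (Pi.single i 1 : Fin d → ℂ) + (c * t) • (Pi.single j 1 : Fin d → ℂ) with hxdef
      have hx1 : star x ⬝ᵥ x = 1 := by
        rw [hxdef, norm_expand, single_dot_self, single_dot_self,
          single_dot_other i j hij, single_dot_other j i (Ne.symm hij), _root_.map_mul, hcconj]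
        linear_combination (c * c) * htt + hcoef
      have hq := hMle x hx1
      rw [hxdef, dot_expand, single_dot_mulVec, single_dot_mulVec, single_dot_mulVec,
        single_dot_mulVec, hdiag i, hdiag j, hsym, _root_.map_mul, hcconj] at hq
      have hsimp : c * c * (ν:ℂ) + c * (c * t) * M i j
            + c * starRingEnd ℂ t * c * starRingEnd ℂ (M i j)
            + c * starRingEnd ℂ t * (c * t) * (ν:ℂ)
          = (ν : ℂ) + c * c * ((2 * (t * M i j).re : ℝ) : ℂ) := by
        have hadd : t * M i j + starRingEnd ℂ (t * M i j) = ((2 * (t * M i j).re : ℝ) : ℂ) :=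
          Complex.add_conj _
        rw [_root_.map_mul] at hadd
        linear_combination (c * c * (ν:ℂ)) * htt + (ν:ℂ) * hcoef + (c * c) * hadd
      rw [hsimp] at hq
      have h9 : ((ν : ℂ) + c * c * ((2 * (t * M i j).re : ℝ) : ℂ)).re
          = ν + rr * rr * (2 * (t * M i j).re) := by
        rw [hcdef]
        push_cast
        simp
      rw [h9] at hq
      nlinarith [hq, hcoefR]
    have h1 := hkey 1 (by norm_num)
    have h2 := hkey (-1) (by norm_num)
    have h3 := hkey Complex.I (by simp)
    have h4 := hkey (-Complex.I) (by simp)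
    rw [one_mul] at h1
    rw [neg_one_mul, Complex.neg_re] at h2
    have h3' : -(M i j).im ≤ 0 := by
      simpa [Complex.mul_re, Complex.I_re, Complex.I_im] using h3
    have h4' : (M i j).im ≤ 0 := by
      simpa [Complex.mul_re, Complex.I_re, Complex.I_im] using h4
    apply Complex.ext
    · simpa using le_antisymm h1 (by linarith)
    · simpa using le_antisymm h4' (by linarith)
  have hMid : M = (ν : ℂ) • (1 : Matrix (Fin d) (Fin d) ℂ) := by
    ext i j
    by_cases hij : i = j
    · subst hij
      simp [hdiag i, Matrix.one_apply]
    · simp [hoff i j hij, Matrix.one_apply, hij]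
  -- final contradiction
  obtain ⟨x, hx1, hxq⟩ := interior_subset hz₀
  have hq0 : star x ⬝ᵥ M.mulVec x = (ν : ℂ) := by
    rw [hMid, smul_mulVec, one_mulVec, dotProduct_smul, smul_eq_mul, hx1, mul_one]
  have hfz₀ : f z₀ = μ := by
    rw [hqM, hxq] at hq0
    have h10 := congrArg Complex.re hq0
    have h11 : (starRingEnd ℂ w * z₀ + w * starRingEnd ℂ z₀).re
        = 2 * (starRingEnd ℂ w * z₀).re := by
      simp [Complex.add_re, Complex.mul_re, Complex.conj_re, Complex.conj_im]
      ring
    rw [h11] at h10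
    rw [hfw]
    simp only [Complex.ofReal_re] at h10
    linarith [h10]
  have := hf z₀ hz₀
  rw [hfz₀] at this
  exact lt_irrefl _ this
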